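/- Let L, c, f_co > 0 and θ ∈ (0, π/2), and define F̂(f) = f^{-2}·(L − (L³π²f²/(6c²))·(1 − f_co²/(2f²) − cos θ)²) for f > 0. Then f₁⁽²⁾ = √5·f_co² / √(36c²/(L²π²) + 6(1 − cos θ)·f_co²) is the unique f > 0 at which the second derivative of F̂ vanishes. -/

import Mathlib

open Real

/-- The normalized signal-strength function
`F̂(f) = f⁻²·(L − (L³π²f²/(6c²))·(1 − f_co²/(2f²) − cos θ)²)`. -/
noncomputable def Fhat (L c f_co θ : ℝ) (f : ℝ) : ℝ :=
  (L - (L ^ 3 * π ^ 2 * f ^ 2 / (6 * c ^ 2)) *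
      (1 - f_co ^ 2 / (2 * f ^ 2) - Real.cos θ) ^ 2) / f ^ 2

/-- The inflection point `f₁⁽²⁾ = √5·f_co² / √(36c²/(L²π²) + 6(1 − cos θ)·f_co²)`. -/
noncomputable def fTwo (L c f_co θ : ℝ) : ℝ :=
  Real.sqrt 5 * f_co ^ 2 /
    Real.sqrt (36 * c ^ 2 / (L ^ 2 * π ^ 2) + 6 * (1 - Real.cos θ) * f_co ^ 2)

lemma hasDerivAt_aux (a b d x : ℝ) (hx : x ≠ 0) :
    HasDerivAt (fun f : ℝ => a + b / f ^ 2 + d / f ^ 4)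
      (-2 * b / x ^ 3 - 4 * d / x ^ 5) x := by
  have h := (((hasDerivAt_const x a).add
      ((hasDerivAt_const x b).div (hasDerivAt_pow 2 x) (pow_ne_zero 2 hx)))).add
      ((hasDerivAt_const x d).div (hasDerivAt_pow 4 x) (pow_ne_zero 4 hx))
  refine h.congr_deriv ?_
  field_simp
  ring

lemma hasDerivAt_aux' (b d x : ℝ) (hx : x ≠ 0) :
    HasDerivAt (fun f : ℝ => -2 * b / f ^ 3 - 4 * d / f ^ 5)
      (6 * b / x ^ 4 + 20 * d / x ^ 6) x := by
  have h := (((hasDerivAt_const x (-2 * b)).div (hasDerivAt_pow 3 x)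
      (pow_ne_zero 3 hx))).sub
      ((hasDerivAt_const x (4 * d)).div (hasDerivAt_pow 5 x) (pow_ne_zero 5 hx))
  refine h.congr_deriv ?_
  field_simp
  ring

lemma deriv2_aux (a b d x : ℝ) (hx : x ≠ 0) :
    deriv (deriv (fun f : ℝ => a + b / f ^ 2 + d / f ^ 4)) x
      = 6 * b / x ^ 4 + 20 * d / x ^ 6 := by
  have hev : deriv (fun f : ℝ => a + b / f ^ 2 + d / f ^ 4)
      =ᶠ[nhds x] fun f : ℝ => -2 * b / f ^ 3 - 4 * d / f ^ 5 := by
    filter_upwards [compl_singleton_mem_nhds hx] with y hy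
    exact (hasDerivAt_aux a b d y hy).deriv
  rw [hev.deriv_eq, (hasDerivAt_aux' b d x hx).deriv]

/-- `f₁⁽²⁾` is the unique positive `f` at which the second derivative of `F̂`
vanishes. -/
theorem fTwo_unique_inflection_point (L c f_co θ : ℝ) (hL : 0 < L) (hc : 0 < c)
    (hfco : 0 < f_co) (hθ : θ ∈ Set.Ioo 0 (π / 2)) :
    0 < fTwo L c f_co θ ∧
      ∀ f : ℝ, 0 < f →
        (deriv (deriv (Fhat L c f_co θ)) f = 0 ↔ f = fTwo L c f_co θ) := by
  have hπ : (0:ℝ) < π := Real.pi_pos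
  obtain ⟨hθ0, hθ1⟩ := hθ
  have hcos1 : Real.cos θ < 1 := by
    calc Real.cos θ < Real.cos 0 :=
          Real.cos_lt_cos_of_nonneg_of_le_pi le_rfl (by linarith) hθ0
      _ = 1 := Real.cos_zero
  have hk : 0 < 1 - Real.cos θ := by linarith
  set k : ℝ := 1 - Real.cos θ with hkdef
  set C0 : ℝ := -(L ^ 3 * π ^ 2 / (6 * c ^ 2)) * k ^ 2 with hC0
  set C2 : ℝ := L + L ^ 3 * π ^ 2 / (6 * c ^ 2) * k * f_co ^ 2 with hC2
  set C4 : ℝ := -(L ^ 3 * π ^ 2 / (24 * c ^ 2)) * f_co ^ 4 with hC4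
  have hC2pos : 0 < C2 := by rw [hC2]; positivity
  set D : ℝ := 36 * c ^ 2 / (L ^ 2 * π ^ 2) + 6 * k * f_co ^ 2 with hD
  have hDpos : 0 < D := by rw [hD]; positivity
  have hfTwo_pos : 0 < fTwo L c f_co θ := by
    simp only [fTwo, ← hkdef, ← hD]
    exact div_pos (by positivity) (Real.sqrt_pos.mpr hDpos)
  have hfTwo_sq : (fTwo L c f_co θ) ^ 2 = 5 * f_co ^ 4 / D := by
    simp only [fTwo, ← hkdef, ← hD]
    rw [div_pow, mul_pow, Real.sq_sqrt (by norm_num : (0:ℝ) ≤ 5),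
      Real.sq_sqrt hDpos.le]
    ring
  have hfid : (fTwo L c f_co θ) ^ 2 * (6 * C2) = -(20 * C4) := by
    rw [hfTwo_sq, hC2, hC4, hD]
    field_simp
    ring
  refine ⟨hfTwo_pos, fun f hf => ?_⟩
  have hfne : f ≠ 0 := hf.ne'
  have hFG : Fhat L c f_co θ =ᶠ[nhds f]
      fun g : ℝ => C0 + C2 / g ^ 2 + C4 / g ^ 4 := by
    filter_upwards [compl_singleton_mem_nhds hfne] with y hy
    have hy' : (y : ℝ) ≠ 0 := hy
    simp only [Fhat, hC0, hC2, hC4, hkdef]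
    field_simp
    ring
  have hkey : deriv (deriv (Fhat L c f_co θ)) f
      = 6 * C2 / f ^ 4 + 20 * C4 / f ^ 6 := by
    rw [(hFG.deriv).deriv_eq, deriv2_aux C0 C2 C4 f hfne]
  have e1 : 6 * C2 / f ^ 4 + 20 * C4 / f ^ 6
      = (6 * C2 * f ^ 2 + 20 * C4) / f ^ 6 := by
    field_simp
  rw [hkey, e1, div_eq_zero_iff, or_iff_left (pow_ne_zero 6 hfne)]
  constructor
  · intro h'
    have h2 : f ^ 2 * (6 * C2) = (fTwo L c f_co θ) ^ 2 * (6 * C2) := by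
      rw [hfid]; linear_combination h'
    have hsq : f ^ 2 = (fTwo L c f_co θ) ^ 2 :=
      mul_right_cancel₀ (by positivity) h2
    calc f = Real.sqrt (f ^ 2) := (Real.sqrt_sq hf.le).symm
      _ = Real.sqrt ((fTwo L c f_co θ) ^ 2) := by rw [hsq]
      _ = fTwo L c f_co θ := Real.sqrt_sq hfTwo_pos.le
  · rintro rfl
    linear_combination hfid
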